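/- Let (G, Γ) be a Hecke pair and g ∈ G, and define the relation ⇝ on subsets of G by: D ⇝ E if and only if there exist x ∈ G and γ ∈ Γ with D = ΓxΓ and E = Γ(x⁻¹γx)Γ. Suppose that for every sequence (γₖ)_{k ≥ 1} of elements of Γ there exists N ∈ ℕ such that [g, γ₁, …, γ_N] ∈ Γ. Then the set {E ⊆ G : E is reachable from ΓgΓ by the reflexive-transitive closure of ⇝} is finite. -/

import Mathlib

open Pointwise

/-- The commutator `[s,t] = s⁻¹t⁻¹st`. -/
def pcomm {G : Type*} [Group G] (s t : G) : G := s⁻¹ * t⁻¹ * s * t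

/-- The iterated commutator `[g, γ₁, …, γₙ]`. -/
def itComm {G : Type*} [Group G] (g : G) (γ : ℕ → G) : ℕ → G
  | 0 => g
  | n + 1 => pcomm (itComm g γ n) (γ (n + 1))

section aux
variable {G : Type*} [Group G] (Γ : Subgroup G)

lemma mem_dc' {x z : G} : z ∈ (Γ : Set G) * {x} * (Γ : Set G) ↔ ∃ α ∈ Γ, ∃ β ∈ Γ, z = α * x * β := by
  constructor
  · rintro ⟨w, hw, β, hβ, rfl⟩
    rcases hw with ⟨α, hα, x', hx', rfl⟩
    rcases hx' with rfl
    exact ⟨α, hα, β, hβ, rfl⟩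
  · rintro ⟨α, hα, β, hβ, rfl⟩
    exact ⟨α * x, ⟨α, hα, x, rfl, rfl⟩, β, hβ, rfl⟩

lemma self_mem_dc' (x : G) : x ∈ (Γ : Set G) * {x} * (Γ : Set G) :=
  (mem_dc' Γ).2 ⟨1, one_mem _, 1, one_mem _, by group⟩

lemma dc_congr' {α β : G} (hα : α ∈ Γ) (hβ : β ∈ Γ) (x : G) :
    (Γ : Set G) * {α * x * β} * (Γ : Set G) = (Γ : Set G) * {x} * (Γ : Set G) := by
  ext z
  rw [mem_dc', mem_dc']
  constructor
  · rintro ⟨a, ha, b, hb, rfl⟩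
    exact ⟨a * α, mul_mem ha hα, β * b, mul_mem hβ hb, by group⟩
  · rintro ⟨a, ha, b, hb, rfl⟩
    exact ⟨a * α⁻¹, mul_mem ha (inv_mem hα), β⁻¹ * b, mul_mem (inv_mem hβ) hb, by group⟩

lemma dc_of_mem' {γ : G} (hγ : γ ∈ Γ) : (Γ : Set G) * {γ} * (Γ : Set G) = Γ := by
  ext z
  rw [mem_dc']
  constructor
  · rintro ⟨a, ha, b, hb, rfl⟩; exact mul_mem (mul_mem ha hγ) hb
  · intro hz; exact ⟨z * γ⁻¹, mul_mem hz (inv_mem hγ), 1, one_mem _, by group⟩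

end aux

/-- For a Hecke pair `(G, Γ)` and `g ∈ G`, if for every sequence
`(γₖ) ⊆ Γ` there exists `N` with `[g, γ₁, …, γ_N] ∈ Γ`, then the set of double
cosets reachable from `ΓgΓ` by the successor relation is finite. -/
theorem stmt_12 {G : Type*} [Group G] (Γ : Subgroup G)
    (hHecke : ∀ x : G,
      ((QuotientGroup.mk '' ((Γ : Set G) * {x} * (Γ : Set G))) : Set (G ⧸ Γ)).Finite)
    (g : G)
    (hN : ∀ γs : ℕ → G, (∀ k, γs k ∈ Γ) →
      ∃ N : ℕ, 1 ≤ N ∧ itComm g γs N ∈ Γ) :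
    {E : Set G | Relation.ReflTransGen
      (fun D E : Set G => ∃ x : G, ∃ γ ∈ Γ,
        D = (Γ : Set G) * {x} * (Γ : Set G) ∧
        E = (Γ : Set G) * {x⁻¹ * γ * x} * (Γ : Set G))
      ((Γ : Set G) * {g} * (Γ : Set G)) E}.Finite := by
  set R : Set G → Set G → Prop := fun D E => ∃ x : G, ∃ γ ∈ Γ,
        D = (Γ : Set G) * {x} * (Γ : Set G) ∧
        E = (Γ : Set G) * {x⁻¹ * γ * x} * (Γ : Set G) with hR
  set dc : G → Set G := fun x => (Γ : Set G) * {x} * (Γ : Set G) with hdc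
  -- successors of dc c are of the special form
  have succ_sub : ∀ c E, R (dc c) E → ∃ δ ∈ Γ, E = dc (c⁻¹ * δ * c) := by
    rintro c E ⟨x, γ, hγ, hD, hE⟩
    have hx : x ∈ dc c := hD ▸ self_mem_dc' Γ x
    rcases (mem_dc' Γ).1 hx with ⟨α, hα, β, hβ, rfl⟩
    refine ⟨α⁻¹ * γ * α, mul_mem (mul_mem (inv_mem hα) hγ) hα, ?_⟩
    rw [hE]
    have : (α * c * β)⁻¹ * γ * (α * c * β) = β⁻¹ * (c⁻¹ * (α⁻¹ * γ * α) * c) * β := by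
      group
    rw [this, hdc]
    exact dc_congr' Γ (inv_mem hβ) hβ _
  -- successor sets are finite
  have succ_fin : ∀ c : G, {E | R (dc c) E}.Finite := by
    intro c
    have h1 : ((fun q : G ⧸ Γ => dc q.out) ''
        ((c⁻¹ • ·) '' (QuotientGroup.mk '' (dc c)))).Finite :=
      (((hHecke c).image _).image _)
    refine h1.subset ?_
    rintro E hE
    rcases succ_sub c E hE with ⟨δ, hδ, rfl⟩
    refine ⟨QuotientGroup.mk (c⁻¹ * δ * c), ⟨QuotientGroup.mk (δ * c), ⟨δ * c, ?_, rfl⟩, ?_⟩, ?_⟩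
    · exact (mem_dc' Γ).2 ⟨δ, hδ, 1, one_mem _, by group⟩
    · show c⁻¹ • (QuotientGroup.mk (δ * c) : G ⧸ Γ) = _
      have : c⁻¹ • (QuotientGroup.mk (δ * c) : G ⧸ Γ) = QuotientGroup.mk (c⁻¹ * (δ * c)) := rfl
      rw [this, mul_assoc]
    · -- dc out = dc (c⁻¹δc)
      have hout : QuotientGroup.mk ((QuotientGroup.mk (c⁻¹ * δ * c) : G ⧸ Γ).out) =
          (QuotientGroup.mk (c⁻¹ * δ * c) : G ⧸ Γ) := QuotientGroup.out_eq' _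
      have hβ : (c⁻¹ * δ * c)⁻¹ * (QuotientGroup.mk (c⁻¹ * δ * c) : G ⧸ Γ).out ∈ Γ :=
        QuotientGroup.eq.1 hout.symm
      have hrep : (QuotientGroup.mk (c⁻¹ * δ * c) : G ⧸ Γ).out =
          1 * (c⁻¹ * δ * c) * ((c⁻¹ * δ * c)⁻¹ * (QuotientGroup.mk (c⁻¹ * δ * c) : G ⧸ Γ).out) := by
        group
      show dc _ = _
      rw [hdc]
      conv_lhs => rw [hrep]
      exact dc_congr' Γ (one_mem _) hβ _
  -- decomposition of reachable sets
  have decomp : ∀ c : G, (∀ E, R (dc c) E → {F | Relation.ReflTransGen R E F}.Finite) →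
      {E | Relation.ReflTransGen R (dc c) E}.Finite := by
    intro c hsucc
    have : {E | Relation.ReflTransGen R (dc c) E} ⊆
        {dc c} ∪ ⋃ E ∈ {E | R (dc c) E}, {F | Relation.ReflTransGen R E F} := by
      intro E hE
      rcases Relation.ReflTransGen.cases_head hE with h | ⟨E', hE', htail⟩
      · exact Or.inl (by simp [h.symm])
      · exact Or.inr (Set.mem_biUnion hE' htail)
    exact ((Set.finite_singleton _).union ((succ_fin c).biUnion hsucc)).subset this
  -- Bad predicate and the step lemma
  set Bad : G → Prop := fun c => ¬ {E | Relation.ReflTransGen R (dc c) E}.Finite with hBad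
  have step : ∀ c, Bad c → ∃ δ, δ ∈ Γ ∧ Bad (pcomm c δ) := by
    intro c hc
    by_contra hcon
    push_neg at hcon
    refine hc (decomp c ?_)
    intro E hE
    rcases succ_sub c E hE with ⟨δ, hδ, rfl⟩
    have h1 : dc (pcomm c δ⁻¹) = dc (c⁻¹ * δ * c) := by
      have : pcomm c δ⁻¹ = 1 * (c⁻¹ * δ * c) * δ⁻¹ := by
        rw [pcomm]; group
      rw [hdc, this]
      exact dc_congr' Γ (one_mem _) (inv_mem hδ) _
    have h2 := hcon δ⁻¹ (inv_mem hδ)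
    rw [hBad] at h2
    have h3 := not_not.mp h2
    rwa [h1] at h3
  choose F hF1 hF2 using step
  -- assume infinite, get Bad g
  by_contra hinf
  have hg : Bad g := hinf
  -- build the bad chain
  let seq : ℕ → {c : G // Bad c} := fun n =>
    Nat.rec ⟨g, hg⟩ (fun _ p => ⟨pcomm p.1 (F p.1 p.2), hF2 p.1 p.2⟩) n
  let γs : ℕ → G := fun n => match n with
    | 0 => 1
    | n + 1 => F (seq n).1 (seq n).2
  have hγs : ∀ k, γs k ∈ Γ := by
    intro k
    cases k with
    | zero => exact one_mem _
    | succ n => exact hF1 (seq n).1 (seq n).2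
  have hit : ∀ n, itComm g γs n = (seq n).1 := by
    intro n
    induction n with
    | zero => rfl
    | succ n ih =>
      show pcomm (itComm g γs n) (γs (n+1)) = (seq (n+1)).1
      rw [ih]
  obtain ⟨N, hN1, hNmem⟩ := hN γs hγs
  rw [hit N] at hNmem
  -- dc of a member of Γ is Γ, and reach(Γ) = {Γ}
  have hdcN : dc (seq N).1 = (Γ : Set G) := dc_of_mem' Γ hNmem
  have hbadN : ¬ {E | Relation.ReflTransGen R (dc (seq N).1) E}.Finite := (seq N).2
  rw [hdcN] at hbadN
  refine hbadN (Set.Finite.subset (Set.finite_singleton (Γ : Set G)) ?_)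
  intro E hE
  simp only [Set.mem_setOf_eq] at hE
  simp only [Set.mem_singleton_iff]
  induction hE with
  | refl => rfl
  | tail h1 h2 ih =>
    rename_i b c'
    rcases h2 with ⟨x, γ, hγ, hD, hE'⟩
    rw [ih] at hD
    have hx : x ∈ Γ := by
      have hxx := self_mem_dc' Γ x
      rw [← hD] at hxx
      exact hxx
    have hmem : x⁻¹ * γ * x ∈ Γ := mul_mem (mul_mem (inv_mem hx) hγ) hx
    rw [hE']
    exact dc_of_mem' Γ hmem
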